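/- There exists a non-regular 4-simplex in Euclidean 4-space whose centroid, circumcenter, incenter, and Fermat-Torricelli point all coincide. -/

import Mathlib

/-
Common geometric notions for simplices in Euclidean d-space, following
Edmonds–Hajja–Martini, "Coincidences of simplex centers and related facial
structures".  A d-simplex is given by its d+1 affinely independent vertices
`A : Fin (d+1) → EuclideanSpace ℝ (Fin d)`.
-/

noncomputable section

abbrev Pt (d : ℕ) : Type := EuclideanSpace ℝ (Fin d)

variable {d : ℕ}

/-- The centroid of the simplex with vertices `A`: the average of the vertices. -/
def ctr (A : Fin (d+1) → Pt d) : Pt d := Finset.centroid ℝ Finset.univ A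

/-- `C` is a circumcenter of the simplex with vertices `A`:
it is equidistant from all the vertices. -/
def IsCircumcenter (A : Fin (d+1) → Pt d) (C : Pt d) : Prop :=
  ∃ r : ℝ, ∀ i, dist C (A i) = r

/-- The affine span (hyperplane) of the facet opposite to vertex `j`. -/
def facetSpan (A : Fin (d+1) → Pt d) (j : Fin (d+1)) : Set (Pt d) :=
  (affineSpan ℝ (A '' {i | i ≠ j}) : Set (Pt d))

/-- `I` is the incenter of the simplex with vertices `A`: an interior point
equidistant from the affine hyperplanes spanned by the facets. -/
def IsIncenter (A : Fin (d+1) → Pt d) (I : Pt d) : Prop :=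
  I ∈ interior (convexHull ℝ (Set.range A)) ∧
    ∃ r : ℝ, ∀ j, Metric.infDist I (facetSpan A j) = r

/-- `F` is a Fermat-Torricelli point of the simplex with vertices `A`:
it minimizes the sum of the distances to the vertices. -/
def IsFermatPoint (A : Fin (d+1) → Pt d) (F : Pt d) : Prop :=
  ∀ Q : Pt d, ∑ i, dist F (A i) ≤ ∑ i, dist Q (A i)

/-- The altitude of the simplex at vertex `j`: the distance from `A j` to the
affine span of the opposite facet. -/
def altitude (A : Fin (d+1) → Pt d) (j : Fin (d+1)) : ℝ :=
  Metric.infDist (A j) (facetSpan A j)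

/-- Equiareal: all facets have the same `(d-1)`-dimensional volume; equivalently
(since `d · vol S = facet volume · altitude`), all altitudes are equal. -/
def Equiareal (A : Fin (d+1) → Pt d) : Prop :=
  ∀ j k, altitude A j = altitude A k

/-- `r` is the circumradius of the facet opposite `j`: some point of the affine
span of the facet is at distance `r` from all its vertices. -/
def IsFacetCircumradius (A : Fin (d+1) → Pt d) (j : Fin (d+1)) (r : ℝ) : Prop :=
  ∃ C ∈ affineSpan ℝ (A '' {i | i ≠ j}), ∀ i, i ≠ j → dist C (A i) = r

/-- Equiradial: all facets have the same circumradius. -/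
def Equiradial (A : Fin (d+1) → Pt d) : Prop :=
  ∃ r : ℝ, ∀ j, IsFacetCircumradius A j r

/-- Equifacetal: any two facets are congruent, i.e. there is an isometry of the
ambient space carrying the vertex set of one facet onto that of the other. -/
def Equifacetal (A : Fin (d+1) → Pt d) : Prop :=
  ∀ j k, ∃ f : Pt d ≃ᵢ Pt d, f '' (A '' {i | i ≠ j}) = A '' {i | i ≠ k}

/-- Regular: all edges have equal length. -/
def Regular (A : Fin (d+1) → Pt d) : Prop :=
  ∀ i j k l, i ≠ j → k ≠ l → dist (A i) (A j) = dist (A k) (A l)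

namespace S12
open Real Finset Metric

def u : ℝ := Real.sqrt 5
def pp : ℝ := Real.sqrt (10 + 2*u)
def qq : ℝ := Real.sqrt (10 - 2*u)

lemma hu : u^2 = 5 := Real.sq_sqrt (by norm_num)
lemma hu0 : 0 ≤ u := Real.sqrt_nonneg 5
lemma hu2 : 2 ≤ u := by nlinarith [hu, hu0]
lemma hu3 : u ≤ 3 := by nlinarith [hu, hu0]
lemma hpp0 : 0 ≤ pp := Real.sqrt_nonneg _
lemma hqq0 : 0 ≤ qq := Real.sqrt_nonneg _
lemma hp : pp^2 = 10 + 2*u := Real.sq_sqrt (by nlinarith [hu2, hu3])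
lemma hq : qq^2 = 10 - 2*u := Real.sq_sqrt (by nlinarith [hu2, hu3])

lemma sqeq {a b : ℝ} (ha : 0 ≤ a) (hb : 0 ≤ b) (h : a^2 = b^2) : a = b := by
  rw [← Real.sqrt_sq ha, ← Real.sqrt_sq hb, h]

lemma hpq : pp*qq = 4*u := by
  refine sqeq (mul_nonneg hpp0 hqq0) (by nlinarith [hu0]) ?_
  nlinarith [hp, hq, hu]

lemma hup : (u-1)*pp = 2*qq := by
  refine sqeq (mul_nonneg (by nlinarith [hu2]) hpp0) (by nlinarith [hqq0]) ?_
  nlinarith [hp, hq, hu]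

lemma huq : (u+1)*qq = 2*pp := by
  refine sqeq (mul_nonneg (by nlinarith [hu2]) hqq0) (by nlinarith [hpp0]) ?_
  nlinarith [hp, hq, hu]

def c1 : ℝ := (u-1)/4
def s1 : ℝ := pp/4
def c2 : ℝ := -(u+1)/4
def s2 : ℝ := qq/4

lemma t1 : c1^2 + s1^2 = 1 := by unfold c1 s1; nlinarith [hp, hu]
lemma t2 : c2^2 + s2^2 = 1 := by unfold c2 s2; nlinarith [hq, hu]
lemma i1 : c1^2 - s1^2 = c2 := by unfold c1 s1 c2; nlinarith [hp, hu]
lemma i2 : 2*(c1*s1) = s2 := by unfold c1 s1 s2; nlinarith [hup]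
lemma i3 : c2^2 - s2^2 = c1 := by unfold c2 s2 c1; nlinarith [hq, hu]
lemma i4 : 2*(c2*s2) = -s1 := by unfold c2 s2 s1; nlinarith [huq]
lemma i5 : c1*c2 - s1*s2 = c2 := by unfold c1 c2 s1 s2; nlinarith [hpq, hu]
lemma i7 : c1*c2 + s1*s2 = c1 := by unfold c1 c2 s1 s2; nlinarith [hpq, hu]
lemma i6 : s1*c2 + c1*s2 = -s2 := by
  unfold c1 c2 s1 s2
  have h : (u+1)*pp = (3+u)*qq :=
    sqeq (mul_nonneg (by nlinarith [hu0]) hpp0) (mul_nonneg (by nlinarith [hu0]) hqq0)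
      (by nlinarith [hp, hq, hu])
  nlinarith [h]
lemma i8 : s2*c1 - s1*c2 = s1 := by
  unfold c1 c2 s1 s2
  have h : (u+1)*pp = (3+u)*qq :=
    sqeq (mul_nonneg (by nlinarith [hu0]) hpp0) (mul_nonneg (by nlinarith [hu0]) hqq0)
      (by nlinarith [hp, hq, hu])
  nlinarith [h, huq]
lemma hcc : c1 + c2 = -(1/2) := by unfold c1 c2; ring
lemma hcd : c1 - c2 = u/2 := by unfold c1 c2; ring
lemma h54 : s1^2 + s2^2 = 5/4 := by unfold s1 s2; nlinarith [hp, hq]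
lemma hs1 : 0 ≤ s1 := by unfold s1; nlinarith [hpp0]
lemma hs2 : 0 ≤ s2 := by unfold s2; nlinarith [hqq0]

end S12

namespace S12

def V (a b c d : ℝ) : Pt 4 := (WithLp.equiv 2 (Fin 4 → ℝ)).symm ![a,b,c,d]

lemma V0 (a b c d : ℝ) : V a b c d 0 = a := rfl
lemma V1 (a b c d : ℝ) : V a b c d 1 = b := rfl
lemma V2 (a b c d : ℝ) : V a b c d 2 = c := rfl
lemma V3 (a b c d : ℝ) : V a b c d 3 = d := rfl

def A : Fin 5 → Pt 4 :=
  ![V 1 0 2 0, V c1 s1 (2*c2) (2*s2), V c2 s2 (2*c1) (-(2*s1)),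
    V c2 (-s2) (2*c1) (2*s1), V c1 (-s1) (2*c2) (-(2*s2))]

lemma A0 : A 0 = V 1 0 2 0 := rfl
lemma A1 : A 1 = V c1 s1 (2*c2) (2*s2) := rfl
lemma A2 : A 2 = V c2 s2 (2*c1) (-(2*s1)) := rfl
lemma A3 : A 3 = V c2 (-s2) (2*c1) (2*s1) := rfl
lemma A4 : A 4 = V c1 (-s1) (2*c2) (-(2*s2)) := rfl

lemma hsum : ∑ i, A i = (0 : Pt 4) := by
  rw [Fin.sum_univ_five, A0, A1, A2, A3, A4]
  ext i
  fin_cases i <;> simp [V, PiLp.add_apply]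
  · linear_combination 2*hcc
  · linear_combination 4*hcc

lemma hA0app : ∀ i : Fin 4, (0 : Pt 4) i = 0 := fun _ => rfl

lemma hAnormsq : ∀ i, ‖A i‖^2 = 5 := by
  intro i
  have h : ∀ x : Pt 4, ‖x‖^2 = ∑ j, (x j)^2 := by
    intro x
    rw [EuclideanSpace.norm_eq, Real.sq_sqrt (by positivity)]
    simp [sq_abs]
  fin_cases i
  · rw [h]; simp [Fin.sum_univ_four, A0, A1, A2, A3, A4, V]; norm_num
  · rw [h]; simp [Fin.sum_univ_four, A0, A1, A2, A3, A4, V]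
    linear_combination t1 + 4*t2
  · rw [h]; simp [Fin.sum_univ_four, A0, A1, A2, A3, A4, V]
    linear_combination 4*t1 + t2
  · rw [h]; simp [Fin.sum_univ_four, A0, A1, A2, A3, A4, V]
    linear_combination 4*t1 + t2
  · rw [h]; simp [Fin.sum_univ_four, A0, A1, A2, A3, A4, V]
    linear_combination t1 + 4*t2

/-- the rotation map -/
def Lf : Pt 4 → Pt 4 := fun x =>
  V (c1*x 0 - s1*x 1) (s1*x 0 + c1*x 1) (c2*x 2 - s2*x 3) (s2*x 2 + c2*x 3)

def Lg : Pt 4 → Pt 4 := fun x =>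
  V (c1*x 0 + s1*x 1) (-(s1*x 0) + c1*x 1) (c2*x 2 + s2*x 3) (-(s2*x 2) + c2*x 3)

lemma LgLf (x : Pt 4) : Lg (Lf x) = x := by
  ext i
  fin_cases i <;> simp [Lf, Lg, V] <;>
    first
    | linear_combination (x 0) * t1
    | linear_combination (x 1) * t1
    | linear_combination (x 2) * t2
    | linear_combination (x 3) * t2

lemma LfLg (x : Pt 4) : Lf (Lg x) = x := by
  ext i
  fin_cases i <;> simp [Lf, Lg, V] <;>
    first
    | linear_combination (x 0) * t1
    | linear_combination (x 1) * t1
    | linear_combination (x 2) * t2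
    | linear_combination (x 3) * t2

def σe : Pt 4 ≃ Pt 4 := ⟨Lf, Lg, LgLf, LfLg⟩

lemma hLfiso : Isometry Lf := by
  apply Isometry.of_dist_eq
  intro x y
  rw [EuclideanSpace.dist_eq, EuclideanSpace.dist_eq]
  congr 1
  simp only [Fin.sum_univ_four, Real.dist_eq, sq_abs, Lf, V0, V1, V2, V3]
  linear_combination ((x 0 - y 0)^2 + (x 1 - y 1)^2) * t1 +
    ((x 2 - y 2)^2 + (x 3 - y 3)^2) * t2

def σ : Pt 4 ≃ᵢ Pt 4 := ⟨σe, hLfiso⟩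

def Lσ : Pt 4 →ₗ[ℝ] Pt 4 where
  toFun := Lf
  map_add' x y := by ext i; fin_cases i <;> simp [Lf, V, PiLp.add_apply] <;> ring
  map_smul' c x := by ext i; fin_cases i <;> simp [Lf, V, PiLp.smul_apply, smul_eq_mul] <;> ring

lemma hσ0 : Lf 0 = 0 := by
  ext i; fin_cases i <;> simp [Lf, V, hA0app]

lemma hσA : ∀ i, Lf (A i) = A (i+1) := by
  intro i
  fin_cases i <;> [skip; skip; skip; skip; skip] <;>
    ext j <;>
    fin_cases j <;>
    simp [Lf, A0, A1, A2, A3, A4, V, show ((0:Fin 5)+1) = 1 from rfl,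
      show ((1:Fin 5)+1) = 2 from rfl, show ((2:Fin 5)+1) = 3 from rfl,
      show ((3:Fin 5)+1) = 4 from rfl, show ((4:Fin 5)+1) = 0 from rfl] <;>
    first
    | ring1
    | linear_combination i1
    | linear_combination i2
    | linear_combination i3
    | linear_combination i4
    | linear_combination i5
    | linear_combination i6
    | linear_combination i7
    | linear_combination i8
    | linear_combination (-1:ℝ)*i1
    | linear_combination (-1:ℝ)*i2
    | linear_combination (-1:ℝ)*i3
    | linear_combination (-1:ℝ)*i4
    | linear_combination (-1:ℝ)*i5
    | linear_combination (-1:ℝ)*i6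
    | linear_combination (-1:ℝ)*i7
    | linear_combination (-1:ℝ)*i8
    | linear_combination 2*i1
    | linear_combination 2*i2
    | linear_combination 2*i3
    | linear_combination 2*i4
    | linear_combination 2*i5
    | linear_combination 2*i6
    | linear_combination 2*i7
    | linear_combination 2*i8
    | linear_combination (-2:ℝ)*i1
    | linear_combination (-2:ℝ)*i2
    | linear_combination (-2:ℝ)*i3
    | linear_combination (-2:ℝ)*i4
    | linear_combination (-2:ℝ)*i5
    | linear_combination (-2:ℝ)*i6
    | linear_combination (-2:ℝ)*i7
    | linear_combination (-2:ℝ)*i8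
    | linear_combination t1
    | linear_combination 2*t1
    | linear_combination t2
    | linear_combination 2*t2

lemma normsq (x : Pt 4) : ‖x‖^2 = ∑ j, (x j)^2 := by
  rw [EuclideanSpace.norm_eq, Real.sq_sqrt (by positivity)]
  simp [sq_abs]

lemma hindep : AffineIndependent ℝ A := by
  rw [affineIndependent_iff_of_fintype]
  intro w h0 hw
  rw [Finset.weightedVSub_eq_linear_combination _ h0] at hw
  rw [Fin.sum_univ_five] at hw
  rw [Fin.sum_univ_five] at h0
  have E0 := congrArg (fun v : Pt 4 => v 0) hw
  have E1 := congrArg (fun v : Pt 4 => v 1) hw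
  have E2 := congrArg (fun v : Pt 4 => v 2) hw
  have E3 := congrArg (fun v : Pt 4 => v 3) hw
  simp only [A0, A1, A2, A3, A4, PiLp.add_apply, PiLp.smul_apply, smul_eq_mul,
    V0, V1, V2, V3, PiLp.zero_apply] at E0 E1 E2 E3
  have hd : w 1 = w 4 := by
    have key : (s1^2 + s2^2) * (w 1 - w 4) = 0 := by
      linear_combination s1*E1 + (s2/2)*E3
    have key2 : (5/4 : ℝ) * (w 1 - w 4) = 0 := by
      linear_combination key - (w 1 - w 4)*h54
    linarith
  have he : w 2 = w 3 := by
    have key : (s1^2 + s2^2) * (w 2 - w 3) = 0 := by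
      linear_combination s2*E1 - (s1/2)*E3
    have key2 : (5/4 : ℝ) * (w 2 - w 3) = 0 := by
      linear_combination key - (w 2 - w 3)*h54
    linarith
  have h12 : w 1 = w 2 := by
    have key : u * (w 1 - w 2) = 0 := by
      linear_combination E0 - (1/2)*E2 + (c1-c2)*hd - (c1-c2)*he - 2*(w 1 - w 2)*hcd
    rcases mul_eq_zero.mp key with h | h
    · exfalso; linarith [hu2]
    · linarith
  have hw0 : w 0 = w 1 := by
    linear_combination E0 + c1*hd + c2*he + 2*c2*h12 - 2*(w 1)*hcc
  intro i
  fin_cases i <;> simp <;> linarith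

lemma hctr : ctr A = (0 : Pt 4) := by
  classical
  have hw : ∑ i : Fin 5, Finset.univ.centroidWeights ℝ i = 1 := by
    simp [Finset.centroidWeights_apply]
  rw [ctr, Finset.centroid_def, Finset.affineCombination_eq_linear_combination _ _ _ hw]
  have hwi : ∀ i : Fin 5, (Finset.univ.centroidWeights ℝ i) • A i = (5:ℝ)⁻¹ • A i := by
    intro i; simp [Finset.centroidWeights_apply]
  rw [Finset.sum_congr rfl (fun i _ => hwi i), ← Finset.smul_sum, hsum, smul_zero]

lemma hcirc : IsCircumcenter A 0 :=
  ⟨Real.sqrt 5, fun i => by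
    rw [dist_zero_left, ← Real.sqrt_sq (norm_nonneg (A i)), hAnormsq i]⟩

lemma hnonreg : ¬ Regular A := by
  intro h
  have h1 := h 0 1 0 2 (by decide) (by decide)
  rw [dist_eq_norm, dist_eq_norm] at h1
  have e1 : ‖A 0 - A 1‖^2 = 10 - 2*c1 - 8*c2 := by
    rw [normsq]
    simp [Fin.sum_univ_four, A0, A1, PiLp.sub_apply, V]
    linear_combination t1 + 4*t2
  have e2 : ‖A 0 - A 2‖^2 = 10 - 2*c2 - 8*c1 := by
    rw [normsq]
    simp [Fin.sum_univ_four, A0, A2, PiLp.sub_apply, V]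
    linear_combination t2 + 4*t1
  have h2 : ‖A 0 - A 1‖^2 = ‖A 0 - A 2‖^2 := by rw [h1]
  rw [e1, e2] at h2
  have : u = 0 := by linarith [hcd, h2]
  linarith [hu2]

lemma himg (j : Fin 5) : Lf '' (A '' {i | i ≠ j}) = A '' {i | i ≠ j + 1} := by
  ext x
  constructor
  · rintro ⟨y, ⟨i, hi, rfl⟩, rfl⟩
    exact ⟨i + 1, fun hc => hi (add_right_cancel hc), (hσA i).symm⟩
  · rintro ⟨m, hm, rfl⟩
    refine ⟨A (m - 1), ⟨m - 1, ?_, rfl⟩, ?_⟩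
    · intro hc
      exact hm (by rw [← hc, sub_add_cancel])
    · rw [hσA (m - 1), sub_add_cancel]

set_option maxHeartbeats 1000000 in
lemma hfacet_step (j : Fin 5) :
    Metric.infDist (0 : Pt 4) (facetSpan A (j + 1)) =
      Metric.infDist (0 : Pt 4) (facetSpan A j) := by
  have hspan : facetSpan A (j + 1) = Lf '' facetSpan A j := by
    have hfun : ⇑Lσ.toAffineMap = Lf := rfl
    have h2 := AffineSubspace.map_span Lσ.toAffineMap (A '' {i | i ≠ j})
    rw [hfun] at h2
    have h3 := congrArg (fun (S : AffineSubspace ℝ (Pt 4)) => (S : Set (Pt 4))) h2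
    simp only [AffineSubspace.coe_map, hfun] at h3
    unfold facetSpan
    rw [← himg j, ← h3]
  rw [hspan]
  conv_lhs => rw [← hσ0]
  exact Metric.infDist_image hLfiso

lemma hfacets : ∀ j, Metric.infDist (0 : Pt 4) (facetSpan A j) =
    Metric.infDist (0 : Pt 4) (facetSpan A 0) := by
  have s0 := hfacet_step 0
  have s1 := hfacet_step 1
  have s2 := hfacet_step 2
  have s3 := hfacet_step 3
  rw [show (0:Fin 5)+1 = 1 from rfl] at s0
  rw [show (1:Fin 5)+1 = 2 from rfl] at s1
  rw [show (2:Fin 5)+1 = 3 from rfl] at s2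
  rw [show (3:Fin 5)+1 = 4 from rfl] at s3
  intro j
  fin_cases j
  · rfl
  · exact s0
  · exact s1.trans s0
  · exact (s2.trans s1).trans s0
  · exact ((s3.trans s2).trans s1).trans s0

lemma htop : affineSpan ℝ (Set.range A) = ⊤ := by
  rw [hindep.affineSpan_eq_top_iff_card_eq_finrank_add_one]
  simp [finrank_euclideanSpace_fin]

def bA : AffineBasis (Fin 5) ℝ (Pt 4) := ⟨A, hindep, htop⟩

lemma hint : (0 : Pt 4) ∈ interior (convexHull ℝ (Set.range A)) := by
  have h := bA.centroid_mem_interior_convexHull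
  have hcoe : (bA : Fin 5 → Pt 4) = A := rfl
  rw [hcoe] at h
  rwa [show Finset.univ.centroid ℝ A = (0 : Pt 4) from hctr] at h

lemma hfermat : IsFermatPoint A 0 := by
  intro Q
  have h5pos : (0:ℝ) < Real.sqrt 5 := Real.sqrt_pos.mpr (by norm_num)
  have h55 : Real.sqrt 5 * Real.sqrt 5 = 5 := Real.mul_self_sqrt (by norm_num)
  have hb : ∀ i, 5 - (inner ℝ Q (A i) : ℝ) ≤ Real.sqrt 5 * dist Q (A i) := by
    intro i
    have h1 : (inner ℝ (A i - Q) (A i) : ℝ) ≤ ‖A i - Q‖ * ‖A i‖ := real_inner_le_norm _ _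
    have h2 : (inner ℝ (A i - Q) (A i) : ℝ) = ‖A i‖^2 - (inner ℝ Q (A i) : ℝ) := by
      rw [inner_sub_left, real_inner_self_eq_norm_sq]
    have h3 : ‖A i - Q‖ = dist Q (A i) := by rw [dist_eq_norm, norm_sub_rev]
    have h5 : ‖A i‖ = Real.sqrt 5 := by
      rw [← Real.sqrt_sq (norm_nonneg (A i)), hAnormsq i]
    rw [h2, hAnormsq i, h3, h5] at h1
    linarith
  have hbsum : (25:ℝ) ≤ Real.sqrt 5 * ∑ i, dist Q (A i) := by
    have := Finset.sum_le_sum (s := Finset.univ) (fun i (_ : i ∈ Finset.univ) => hb i)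
    rw [Finset.sum_sub_distrib, ← inner_sum, hsum, inner_zero_right] at this
    simp only [Finset.sum_const, Finset.card_univ, Fintype.card_fin, nsmul_eq_mul] at this
    rw [Finset.mul_sum]
    push_cast at this
    linarith [this]
  have hL : ∑ i, dist (0 : Pt 4) (A i) = 5 * Real.sqrt 5 := by
    have : ∀ i : Fin 5, dist (0 : Pt 4) (A i) = Real.sqrt 5 := fun i => by
      rw [dist_zero_left, ← Real.sqrt_sq (norm_nonneg (A i)), hAnormsq i]
    simp [this]
  rw [hL]
  nlinarith [hbsum, h5pos, h55]

end S12

/-- Corollary 4.2. There is a non-regular 4-simplex whose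
centroid, circumcenter, incenter and Fermat-Torricelli point all coincide. -/
theorem statement12 :
    ∃ A : Fin 5 → Pt 4, AffineIndependent ℝ A ∧ ¬ Regular A ∧
      ∃ P : Pt 4, P = ctr A ∧ IsCircumcenter A P ∧ IsIncenter A P ∧
        IsFermatPoint A P := by
  refine ⟨S12.A, S12.hindep, S12.hnonreg, 0, S12.hctr.symm, S12.hcirc,
    ⟨S12.hint, Metric.infDist (0 : Pt 4) (facetSpan S12.A 0), S12.hfacets⟩,
    S12.hfermat⟩
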